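/- Let Δ_0,...,Δ_{t-1} ∈ ℝ, x_0,...,x_{t-1} ∈ ℝ^d, and Σ_t = λI + Σ_i x_i x_iᵀ with λ > 0. Then ‖Σ_{i} Δ_i x_i‖²_{Σ_t^{-1}} ≤ (Σ_i Δ_i²)·(Σ_i ‖x_i‖²_{Σ_t^{-1}}) ≤ d·Σ_{i=0}^{t-1} Δ_i². -/

import Mathlib

open Matrix Finset

private lemma msb_dot_sum {d : ℕ} {ι : Type*} (s : Finset ι) (u : Fin d → ℝ) (v : ι → Fin d → ℝ) :
    u ⬝ᵥ (∑ i ∈ s, v i) = ∑ i ∈ s, u ⬝ᵥ v i := by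
  classical
  induction s using Finset.induction_on with
  | empty => simp
  | insert _ _ h ih => simp [Finset.sum_insert h, dotProduct_add, ih]

private lemma msb_sum_dot {d : ℕ} {ι : Type*} (s : Finset ι) (u : Fin d → ℝ) (v : ι → Fin d → ℝ) :
    (∑ i ∈ s, v i) ⬝ᵥ u = ∑ i ∈ s, v i ⬝ᵥ u := by
  classical
  induction s using Finset.induction_on with
  | empty => simp
  | insert _ _ h ih => simp [Finset.sum_insert h, add_dotProduct, ih]

private lemma msb_dot_self_nonneg {d : ℕ} (v : Fin d → ℝ) : 0 ≤ v ⬝ᵥ v :=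
  Finset.sum_nonneg fun i _ => mul_self_nonneg _

private lemma msb_sum_mulVec {d t : ℕ} (M : ℕ → Matrix (Fin d) (Fin d) ℝ) (v : Fin d → ℝ) :
    (∑ i ∈ Finset.range t, M i) *ᵥ v = ∑ i ∈ Finset.range t, (M i *ᵥ v) := by
  induction t with
  | zero => simp
  | succ n ih => rw [Finset.sum_range_succ, Finset.sum_range_succ, add_mulVec, ih]

private lemma msb_mulVec_sum {d t : ℕ} (M : Matrix (Fin d) (Fin d) ℝ) (v : ℕ → Fin d → ℝ)
    (c : ℕ → ℝ) :
    M *ᵥ (∑ i ∈ Finset.range t, c i • v i) = ∑ i ∈ Finset.range t, c i • (M *ᵥ v i) := by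
  induction t with
  | zero => simp
  | succ n ih => rw [Finset.sum_range_succ, Finset.sum_range_succ, mulVec_add, ih,
      mulVec_smul]

private lemma msb_vecMulVec_quad {d : ℕ} (u v : Fin d → ℝ) (w : Fin d → ℝ) :
    w ⬝ᵥ (vecMulVec u u *ᵥ v) = (u ⬝ᵥ w) * (u ⬝ᵥ v) := by
  simp only [dotProduct, mulVec, vecMulVec_apply, Finset.sum_mul, Finset.mul_sum]
  rw [Finset.sum_comm]
  exact Finset.sum_congr rfl fun j _ => Finset.sum_congr rfl fun i _ => by ring

private lemma msb_posdef {d : ℕ} (lam : ℝ) (hlam : 0 < lam) (t : ℕ) (x : ℕ → Fin d → ℝ) :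
    (lam • (1 : Matrix (Fin d) (Fin d) ℝ)
      + ∑ i ∈ Finset.range t, vecMulVec (x i) (x i)).PosDef := by
  rw [posDef_iff_dotProduct_mulVec]
  constructor
  · unfold Matrix.IsHermitian
    ext i j
    simp [conjTranspose, Matrix.sum_apply, vecMulVec_apply, Matrix.one_apply, eq_comm,
      mul_comm]
  · intro v hv
    have h1 : star v ⬝ᵥ ((lam • (1 : Matrix (Fin d) (Fin d) ℝ)
        + ∑ i ∈ Finset.range t, vecMulVec (x i) (x i)) *ᵥ v)
        = lam * (v ⬝ᵥ v) + ∑ i ∈ Finset.range t, (x i ⬝ᵥ v) ^ 2 := by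
      rw [add_mulVec, dotProduct_add]
      congr 1
      · simp [smul_mulVec, dotProduct_smul, star_trivial]
      · rw [msb_sum_mulVec, star_trivial, msb_dot_sum]
        exact Finset.sum_congr rfl fun i _ => by rw [msb_vecMulVec_quad, sq]
    rw [h1]
    have h2 : 0 < v ⬝ᵥ v := by
      rcases (msb_dot_self_nonneg v).lt_or_eq with h | h
      · exact h
      · exact absurd (dotProduct_self_eq_zero.mp h.symm) hv
    have h3 : (0:ℝ) ≤ ∑ i ∈ Finset.range t, (x i ⬝ᵥ v) ^ 2 :=
      Finset.sum_nonneg fun i _ => sq_nonneg _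
    positivity

open scoped MatrixOrder in
private lemma msb_sqrt {d : ℕ} {A : Matrix (Fin d) (Fin d) ℝ} (hA : A.PosSemidef) :
    ∃ R : Matrix (Fin d) (Fin d) ℝ, R * R = A ∧ R.PosSemidef :=
  ⟨CFC.sqrt A, CFC.sqrt_mul_sqrt_self A hA.nonneg, (CFC.sqrt_nonneg A).posSemidef⟩

theorem misspecification_term_bound {d t : ℕ} (lam : ℝ) (hlam : 0 < lam)
    (x : ℕ → Fin d → ℝ) (Δ : ℕ → ℝ)
    (S : Matrix (Fin d) (Fin d) ℝ)
    (hS : S = lam • (1 : Matrix (Fin d) (Fin d) ℝ)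
      + ∑ i ∈ Finset.range t, vecMulVec (x i) (x i)) :
    (∑ i ∈ Finset.range t, Δ i • x i) ⬝ᵥ (S⁻¹ *ᵥ ∑ i ∈ Finset.range t, Δ i • x i)
        ≤ (∑ i ∈ Finset.range t, (Δ i) ^ 2)
          * (∑ i ∈ Finset.range t, x i ⬝ᵥ (S⁻¹ *ᵥ x i)) ∧
      (∑ i ∈ Finset.range t, (Δ i) ^ 2)
          * (∑ i ∈ Finset.range t, x i ⬝ᵥ (S⁻¹ *ᵥ x i))
        ≤ (d : ℝ) * ∑ i ∈ Finset.range t, (Δ i) ^ 2 := by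
  have hSpd : S.PosDef := hS ▸ msb_posdef lam hlam t x
  have hApd : (S⁻¹).PosDef := hSpd.inv
  have hA : (S⁻¹).PosSemidef := hApd.posSemidef
  set A := S⁻¹ with hAdef
  obtain ⟨R, hRR, hRpsd⟩ := msb_sqrt hA
  have hRsymm : Rᵀ = R := hRpsd.1
  have hquad : ∀ v w : Fin d → ℝ, v ⬝ᵥ (A *ᵥ w) = (R *ᵥ v) ⬝ᵥ (R *ᵥ w) := by
    intro v w
    rw [← hRR, ← mulVec_mulVec, dotProduct_mulVec v R]
    nth_rewrite 1 [← hRsymm]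
    rw [vecMul_transpose]
  have hyy : ∀ i, x i ⬝ᵥ (A *ᵥ x i) = (R *ᵥ x i) ⬝ᵥ (R *ᵥ x i) := fun i => hquad (x i) (x i)
  have hynn : ∀ i, 0 ≤ (R *ᵥ x i) ⬝ᵥ (R *ᵥ x i) := fun i => msb_dot_self_nonneg ((R *ᵥ x i))
  have part1 : (∑ i ∈ Finset.range t, Δ i • x i) ⬝ᵥ (A *ᵥ ∑ i ∈ Finset.range t, Δ i • x i)
      ≤ (∑ i ∈ Finset.range t, (Δ i) ^ 2) * (∑ i ∈ Finset.range t, x i ⬝ᵥ (A *ᵥ x i)) := by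
    rw [hquad, msb_mulVec_sum]
    have expand : (∑ i ∈ Finset.range t, Δ i • (R *ᵥ x i)) ⬝ᵥ (∑ i ∈ Finset.range t, Δ i • (R *ᵥ x i))
        = ∑ i ∈ Finset.range t, ∑ j ∈ Finset.range t, (Δ i * Δ j) * ((R *ᵥ x i) ⬝ᵥ (R *ᵥ x j)) := by
      rw [msb_sum_dot]
      refine Finset.sum_congr rfl fun i _ => ?_
      rw [msb_dot_sum]
      refine Finset.sum_congr rfl fun j _ => ?_
      rw [smul_dotProduct, dotProduct_smul, smul_eq_mul, smul_eq_mul]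
      ring
    rw [expand]
    have step1 : ∀ i j, (Δ i * Δ j) * ((R *ᵥ x i) ⬝ᵥ (R *ᵥ x j))
        ≤ (|Δ i| * Real.sqrt ((R *ᵥ x i) ⬝ᵥ (R *ᵥ x i))) * (|Δ j| * Real.sqrt ((R *ᵥ x j) ⬝ᵥ (R *ᵥ x j))) := by
      intro i j
      have h1 : ((R *ᵥ x i) ⬝ᵥ (R *ᵥ x j)) ^ 2 ≤ ((R *ᵥ x i) ⬝ᵥ (R *ᵥ x i)) * ((R *ᵥ x j) ⬝ᵥ (R *ᵥ x j)) := by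
        simpa [dotProduct, sq] using
          Finset.sum_mul_sq_le_sq_mul_sq Finset.univ ((R *ᵥ x i)) ((R *ᵥ x j))
      have h2 : |(R *ᵥ x i) ⬝ᵥ (R *ᵥ x j)| ≤ Real.sqrt ((R *ᵥ x i) ⬝ᵥ (R *ᵥ x i)) * Real.sqrt ((R *ᵥ x j) ⬝ᵥ (R *ᵥ x j)) := by
        rw [← Real.sqrt_sq_eq_abs, ← Real.sqrt_mul (hynn i)]
        exact Real.sqrt_le_sqrt h1
      calc (Δ i * Δ j) * ((R *ᵥ x i) ⬝ᵥ (R *ᵥ x j)) ≤ |(Δ i * Δ j) * ((R *ᵥ x i) ⬝ᵥ (R *ᵥ x j))| := le_abs_self _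
        _ = |Δ i| * |Δ j| * |(R *ᵥ x i) ⬝ᵥ (R *ᵥ x j)| := by rw [abs_mul, abs_mul]
        _ ≤ |Δ i| * |Δ j| * (Real.sqrt ((R *ᵥ x i) ⬝ᵥ (R *ᵥ x i)) * Real.sqrt ((R *ᵥ x j) ⬝ᵥ (R *ᵥ x j))) := by
            apply mul_le_mul_of_nonneg_left h2 (by positivity)
        _ = (|Δ i| * Real.sqrt ((R *ᵥ x i) ⬝ᵥ (R *ᵥ x i))) * (|Δ j| * Real.sqrt ((R *ᵥ x j) ⬝ᵥ (R *ᵥ x j))) := by ring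
    calc ∑ i ∈ Finset.range t, ∑ j ∈ Finset.range t, (Δ i * Δ j) * ((R *ᵥ x i) ⬝ᵥ (R *ᵥ x j))
        ≤ ∑ i ∈ Finset.range t, ∑ j ∈ Finset.range t,
            (|Δ i| * Real.sqrt ((R *ᵥ x i) ⬝ᵥ (R *ᵥ x i))) * (|Δ j| * Real.sqrt ((R *ᵥ x j) ⬝ᵥ (R *ᵥ x j))) :=
          Finset.sum_le_sum fun i _ => Finset.sum_le_sum fun j _ => step1 i j
      _ = (∑ i ∈ Finset.range t, |Δ i| * Real.sqrt ((R *ᵥ x i) ⬝ᵥ (R *ᵥ x i))) ^ 2 := by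
          rw [sq, Finset.sum_mul_sum]
      _ ≤ (∑ i ∈ Finset.range t, |Δ i| ^ 2)
            * (∑ i ∈ Finset.range t, Real.sqrt ((R *ᵥ x i) ⬝ᵥ (R *ᵥ x i)) ^ 2) :=
          Finset.sum_mul_sq_le_sq_mul_sq _ _ _
      _ = (∑ i ∈ Finset.range t, (Δ i) ^ 2) * (∑ i ∈ Finset.range t, x i ⬝ᵥ (A *ᵥ x i)) := by
          congr 1
          · exact Finset.sum_congr rfl fun i _ => sq_abs _
          · refine Finset.sum_congr rfl fun i _ => ?_
            rw [Real.sq_sqrt (hynn i)]; exact (hyy i).symm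
  -- part 2
  have htr : ∀ v : Fin d → ℝ, v ⬝ᵥ (A *ᵥ v) = (A * vecMulVec v v).trace := by
    intro v
    simp only [trace, diag_apply, Matrix.mul_apply, vecMulVec_apply, dotProduct, mulVec,
      Finset.mul_sum, Finset.sum_mul]
    rw [Finset.sum_comm]
    have hAsym : ∀ i j, A i j = A j i := fun i j => by
      conv_lhs => rw [← hApd.1]
      rfl
    exact Finset.sum_congr rfl fun i _ => Finset.sum_congr rfl fun j _ => by
      rw [hAsym i j]; ring
  have hdet : IsUnit S.det := hSpd.det_pos.ne'.isUnit
  have hAS : A * S = 1 := Matrix.nonsing_inv_mul S hdet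
  have htrA : 0 ≤ A.trace := by
    refine Finset.sum_nonneg fun i _ => ?_
    have := hA.dotProduct_mulVec_nonneg (Pi.single i 1)
    simpa [dotProduct, mulVec, Pi.single_apply, Finset.mul_sum] using this
  have hsum_eq : ∑ i ∈ Finset.range t, x i ⬝ᵥ (A *ᵥ x i) = (d : ℝ) - lam * A.trace := by
    have h1 : ∑ i ∈ Finset.range t, x i ⬝ᵥ (A *ᵥ x i)
        = (A * ∑ i ∈ Finset.range t, vecMulVec (x i) (x i)).trace := by
      rw [Finset.mul_sum, trace_sum]
      exact Finset.sum_congr rfl fun i _ => htr (x i)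
    have h2 : (∑ i ∈ Finset.range t, vecMulVec (x i) (x i))
        = S - lam • (1 : Matrix (Fin d) (Fin d) ℝ) := by
      rw [hS]; abel
    rw [h1, h2, Matrix.mul_sub, trace_sub, hAS, trace_one, Matrix.mul_smul, trace_smul]
    simp [mul_comm]
  have hQd : ∑ i ∈ Finset.range t, x i ⬝ᵥ (A *ᵥ x i) ≤ (d : ℝ) := by
    rw [hsum_eq]
    nlinarith
  have hΔnn : 0 ≤ ∑ i ∈ Finset.range t, (Δ i) ^ 2 :=
    Finset.sum_nonneg fun i _ => sq_nonneg _
  refine ⟨part1, ?_⟩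
  calc (∑ i ∈ Finset.range t, (Δ i) ^ 2) * (∑ i ∈ Finset.range t, x i ⬝ᵥ (A *ᵥ x i))
      ≤ (∑ i ∈ Finset.range t, (Δ i) ^ 2) * (d : ℝ) :=
        mul_le_mul_of_nonneg_left hQd hΔnn
    _ = (d : ℝ) * ∑ i ∈ Finset.range t, (Δ i) ^ 2 := mul_comm _ _
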